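/- Let Γ be a simple graph that is strongly regular with parameters (275,112,30,56), and let C be a 5-clique of Γ. Then every vertex of Γ not belonging to C is adjacent to exactly 2 vertices of C. -/

import Mathlib

open Finset

/-- In a strongly regular graph with parameters (275,112,30,56), every vertex not
belonging to a 5-clique C is adjacent to exactly 2 vertices of C. -/
theorem srg_275_five_clique_outside_vertex_adj_two
    {V : Type*} [Fintype V] (Γ : SimpleGraph V) [DecidableRel Γ.Adj]
    (hΓ : Γ.IsSRGWith 275 112 30 56)
    (C : Finset V) (hC : Γ.IsNClique 5 C) (v : V) (hv : v ∉ C) :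
    {u : V | u ∈ C ∧ Γ.Adj v u}.ncard = 2 := by
  classical
  have hCcard : C.card = 5 := hC.card_eq
  have hclique : ∀ a ∈ C, ∀ b ∈ C, a ≠ b → Γ.Adj a b := fun a ha b hb hab => hC.1 ha hb hab
  set f : V → ℕ := fun w => (C.filter (fun u => Γ.Adj w u)).card with hf
  -- Step A : counting common outside-neighbours of a pair (or single) of clique vertices
  have stepA : ∀ a ∈ C, ∀ b ∈ C, (Cᶜ.filter (fun w => Γ.Adj w a ∧ Γ.Adj w b)).card
      = if a = b then 108 else 27 := by
    intro a ha b hb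
    by_cases hab : a = b
    · subst hab
      rw [if_pos rfl]
      have hN : Γ.neighborFinset a ∩ C = C.erase a := by
        ext x
        simp only [Finset.mem_inter, SimpleGraph.mem_neighborFinset, Finset.mem_erase]
        constructor
        · rintro ⟨hadj, hx⟩; exact ⟨hadj.ne', hx⟩
        · rintro ⟨hne, hx⟩; exact ⟨hclique a ha x hx hne.symm, hx⟩
      have hNC : (Γ.neighborFinset a ∩ C).card = 4 := by
        rw [hN, Finset.card_erase_of_mem ha, hCcard]
      have hfe : Cᶜ.filter (fun w => Γ.Adj w a ∧ Γ.Adj w a) = Γ.neighborFinset a \ C := by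
        ext x
        simp only [Finset.mem_filter, Finset.mem_compl, Finset.mem_sdiff,
          SimpleGraph.mem_neighborFinset, and_self]
        constructor
        · rintro ⟨hx, hadj⟩; exact ⟨hadj.symm, hx⟩
        · rintro ⟨hadj, hx⟩; exact ⟨hx, hadj.symm⟩
      have hdeg : (Γ.neighborFinset a).card = 112 := hΓ.regular a
      rw [hfe]
      have := Finset.card_sdiff_add_card_inter (Γ.neighborFinset a) C
      omega
    · rw [if_neg hab]
      have hadjab : Γ.Adj a b := hclique a ha b hb hab
      set N := Γ.neighborFinset a ∩ Γ.neighborFinset b with hNdef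
      have hNccard : N.card = 30 := by
        have h1 : N = (Γ.commonNeighbors a b).toFinset := by
          ext x
          simp [hNdef, SimpleGraph.mem_commonNeighbors]
        rw [h1, Set.toFinset_card]
        exact hΓ.of_adj a b hadjab
      have hNC : N ∩ C = (C.erase a).erase b := by
        ext x
        simp only [hNdef, Finset.mem_inter, SimpleGraph.mem_neighborFinset, Finset.mem_erase]
        constructor
        · rintro ⟨⟨h1, h2⟩, hx⟩; exact ⟨h2.ne', ⟨h1.ne', hx⟩⟩
        · rintro ⟨hxb, hxa, hx⟩
          exact ⟨⟨hclique a ha x hx hxa.symm, hclique b hb x hx hxb.symm⟩, hx⟩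
      have hNCcard : (N ∩ C).card = 3 := by
        rw [hNC, Finset.card_erase_of_mem, Finset.card_erase_of_mem ha, hCcard]
        exact Finset.mem_erase.2 ⟨Ne.symm hab, hb⟩
      have hfe : Cᶜ.filter (fun w => Γ.Adj w a ∧ Γ.Adj w b) = N \ C := by
        ext x
        simp only [Finset.mem_filter, Finset.mem_compl, Finset.mem_sdiff, hNdef,
          Finset.mem_inter, SimpleGraph.mem_neighborFinset]
        constructor
        · rintro ⟨hx, h1, h2⟩; exact ⟨⟨h1.symm, h2.symm⟩, hx⟩
        · rintro ⟨⟨h1, h2⟩, hx⟩; exact ⟨hx, h1.symm, h2.symm⟩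
      rw [hfe]
      have := Finset.card_sdiff_add_card_inter N C
      omega
  -- sum of f over Cᶜ
  have hS1 : ∑ w ∈ Cᶜ, f w = 540 := by
    calc ∑ w ∈ Cᶜ, f w = ∑ a ∈ C, (Cᶜ.filter (fun w => Γ.Adj w a)).card := by
          simp only [hf, card_filter]
          rw [Finset.sum_comm]
      _ = ∑ a ∈ C, 108 := Finset.sum_congr rfl (fun a ha => by
          have h := stepA a ha a ha
          simp only [if_pos rfl, and_self] at h
          exact h)
      _ = 540 := by rw [Finset.sum_const, hCcard, smul_eq_mul]
  have hS2 : ∑ w ∈ Cᶜ, (f w)^2 = 1080 := by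
    have h1 : ∀ w, (f w)^2 = ∑ a ∈ C, ∑ b ∈ C, (if Γ.Adj w a ∧ Γ.Adj w b then 1 else 0) := by
      intro w
      rw [hf]
      simp only [card_filter, sq, Finset.sum_mul_sum]
      refine Finset.sum_congr rfl fun a _ => Finset.sum_congr rfl fun b _ => ?_
      split_ifs <;> simp_all
    have h2 : ∑ w ∈ Cᶜ, (f w)^2
        = ∑ a ∈ C, ∑ b ∈ C, (Cᶜ.filter (fun w => Γ.Adj w a ∧ Γ.Adj w b)).card := by
      simp only [h1, card_filter]
      rw [Finset.sum_comm]
      refine Finset.sum_congr rfl fun a _ => Finset.sum_comm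
    rw [h2,
      Finset.sum_congr rfl (fun a ha => Finset.sum_congr rfl (fun b hb => stepA a ha b hb))]
    have h3 : ∀ a ∈ C, ∑ b ∈ C, (if a = b then 108 else 27) = 216 := by
      intro a ha
      rw [← Finset.add_sum_erase C _ ha, if_pos rfl,
        Finset.sum_congr rfl (fun b hb => if_neg (Finset.ne_of_mem_erase hb).symm),
        Finset.sum_const, Finset.card_erase_of_mem ha, hCcard, smul_eq_mul]
    rw [Finset.sum_congr rfl h3, Finset.sum_const, hCcard, smul_eq_mul]
  have hCc : Cᶜ.card = 270 := by
    rw [Finset.card_compl, hCcard, hΓ.card]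
  -- variance argument
  have key : ∑ w ∈ Cᶜ, ((f w : ℤ) - 2)^2 = 0 := by
    have expand : ∀ w, ((f w : ℤ) - 2)^2 = (f w : ℤ)^2 - 4 * (f w : ℤ) + 4 := by intro w; ring
    rw [Finset.sum_congr rfl (fun w _ => expand w), Finset.sum_add_distrib,
      Finset.sum_sub_distrib, Finset.sum_const, hCc]
    have c1 : ∑ w ∈ Cᶜ, (f w : ℤ)^2 = 1080 := by
      have : ((∑ w ∈ Cᶜ, (f w)^2 : ℕ) : ℤ) = ∑ w ∈ Cᶜ, (f w : ℤ)^2 := by push_cast; rfl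
      rw [← this, hS2]; rfl
    have c2 : ∑ w ∈ Cᶜ, (4:ℤ) * (f w : ℤ) = 2160 := by
      rw [← Finset.mul_sum]
      have : ((∑ w ∈ Cᶜ, f w : ℕ) : ℤ) = ∑ w ∈ Cᶜ, (f w : ℤ) := by push_cast; rfl
      rw [← this, hS1]; rfl
    rw [c1, c2]
    ring
  have hvmem : v ∈ Cᶜ := Finset.mem_compl.2 hv
  have hzero : ((f v : ℤ) - 2)^2 = 0 :=
    (Finset.sum_eq_zero_iff_of_nonneg (fun w _ => sq_nonneg _)).1 key v hvmem
  have hfv : f v = 2 := by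
    have : (f v : ℤ) = 2 := by nlinarith [sq_nonneg ((f v : ℤ) - 2)]
    exact_mod_cast this
  have hset : {u : V | u ∈ C ∧ Γ.Adj v u} = ↑(C.filter (fun u => Γ.Adj v u)) := by
    ext u; simp
  rw [hset, Set.ncard_coe_finset]
  exact hfv
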